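/- For any point (z_{-2},...,z_2) in W_5 and any k∈Z_5, the functions R_k(z)=(z_{k+1},z_{k-2};z_{k-1},z_{k+2}) satisfy the quadratic relations R_{k-2}(z)·R_{k+2}(z) = 1 − R_k(z), indices taken modulo 5. -/

import Mathlib

open Complex

noncomputable def crossRatio (a b c d : ℂ) : ℂ :=
  ((a - c) * (b - d)) / ((a - d) * (b - c))

noncomputable def Rk (z : ZMod 5 → ℂ) (k : ZMod 5) : ℂ :=
  crossRatio (z (k + 1)) (z (k - 2)) (z (k - 1)) (z (k + 2))

/-- The quadratic relations `R_{k-2} R_{k+2} = 1 - R_k` on `W₅`. -/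
theorem Rk_quadratic_relations (z : ZMod 5 → ℂ)
    (hW : ∀ j : ZMod 5, z j ≠ z (j + 1)) (k : ZMod 5) :
    Rk z (k - 2) * Rk z (k + 2) = 1 - Rk z k := by
  have e1 : k - 2 - 2 = k + 1 := by
    have h4 : (4 : ZMod 5) = -1 := by decide
    calc k - 2 - 2 = k - 4 := by rw [sub_sub]; norm_num
    _ = k + 1 := by rw [h4]; ring
  have e2 : k - 2 + 1 = k - 1 := by ring
  have e3 : k - 2 - 1 = k + 2 := by
    have h3 : (3 : ZMod 5) = -2 := by decide
    calc k - 2 - 1 = k - 3 := by rw [sub_sub]; norm_num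
    _ = k + 2 := by rw [h3]; ring
  have e4 : k - 2 + 2 = k := by ring
  have e5 : k + 2 + 1 = k - 2 := by
    have h3 : (3 : ZMod 5) = -2 := by decide
    calc k + 2 + 1 = k + 3 := by rw [add_assoc]; norm_num
    _ = k - 2 := by rw [h3]; ring
  have e6 : k + 2 - 2 = k := by ring
  have e7 : k + 2 - 1 = k + 1 := by ring
  have e8 : k + 2 + 2 = k - 1 := by
    have h4 : (4 : ZMod 5) = -1 := by decide
    calc k + 2 + 2 = k + 4 := by rw [add_assoc]; norm_num
    _ = k - 1 := by rw [h4]; ring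
  set a := z (k - 2)
  set b := z (k - 1)
  set c := z k
  set d := z (k + 1)
  set e := z (k + 2)
  have hab : a - b ≠ 0 := sub_ne_zero.mpr (by have := hW (k - 2); simpa [e2] using this)
  have hbc : b - c ≠ 0 := sub_ne_zero.mpr (by
    have := hW (k - 1); simpa [show k - 1 + 1 = k from by ring] using this)
  have hcd : c - d ≠ 0 := sub_ne_zero.mpr (hW k)
  have hde : d - e ≠ 0 := sub_ne_zero.mpr (by
    have := hW (k + 1); simpa [show k + 1 + 1 = k + 2 from by ring] using this)
  simp only [Rk, crossRatio, e1, e2, e3, e4, e5, e6, e7, e8]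
  show ((b - e) * (d - c)) / ((b - c) * (d - e)) * (((a - d) * (c - b)) / ((a - b) * (c - d))) = 1 - ((d - b) * (a - e)) / ((d - e) * (a - b))
  field_simp
  ring
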